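/- For fixed s ≥ 1, a triangle-free graph G admits a set S of at most k vertices with G − S being K_{1,s+1}-free if and only if the graph G' obtained by adding a vertex w adjacent to all vertices of G admits a set F of at most k edges with G' − F being s-diamond-free. -/

import Mathlib

/-- The `s`-diamond `K₂ × (s+1)K₁`: two adjacent center vertices, each adjacent to `s+1`
pairwise non-adjacent vertices. For `s = 1` this is the diamond. -/
def sDiamond (s : ℕ) : SimpleGraph (Fin 2 ⊕ Fin (s + 1)) where
  Adj a b :=
    match a, b with
    | Sum.inl x, Sum.inl y => x ≠ y
    | Sum.inl _, Sum.inr _ => True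
    | Sum.inr _, Sum.inl _ => True
    | Sum.inr _, Sum.inr _ => False
  symm := by
    constructor
    rintro (x | x) (y | y) h
    · exact h.symm
    · trivial
    · trivial
    · exact h
  loopless := by
    constructor
    rintro (x | x) h
    · exact h rfl
    · exact h

/-- The star `K_{1,n}`: one center adjacent to `n` pairwise non-adjacent leaves. -/
def starGraph (n : ℕ) : SimpleGraph (Fin 1 ⊕ Fin n) where
  Adj a b :=
    match a, b with
    | Sum.inl _, Sum.inr _ => True
    | Sum.inr _, Sum.inl _ => True
    | _, _ => False
  symm := by
    constructor
    rintro (x | x) (y | y) h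
    · exact h
    · trivial
    · trivial
    · exact h
  loopless := by constructor; rintro (x | x) h <;> exact h

/-- The graph obtained from `G` by adding a new dominating vertex `none` adjacent to all
vertices of `G`. -/
def cone {V : Type*} (G : SimpleGraph V) : SimpleGraph (Option V) where
  Adj a b :=
    match a, b with
    | some x, some y => G.Adj x y
    | some _, none => True
    | none, some _ => True
    | none, none => False
  symm := by
    constructor
    rintro (_ | x) (_ | y) h
    · exact h
    · trivial
    · trivial
    · exact h.symm
  loopless := by
    constructor
    rintro (_ | x) h
    · exact h
    · exact G.irrefl h

open Classical in
noncomputable def pickO {V : Type*} (e : Sym2 (Option V)) : Option V :=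
  if h : ∃ v : V, (some v : Option V) ∈ e then some h.choose else none

/-- For `s ≥ 1` and `G` triangle-free: there is a set of at most `k` vertices whose
deletion makes `G` `K_{1,s+1}`-free iff there is a set of at most `k` edges whose
deletion from the cone over `G` makes it `s`-diamond-free. -/
theorem stmt_16 {V : Type*} (G : SimpleGraph V) (s k : ℕ) (hs : 1 ≤ s)
    (htf : G.CliqueFree 3) :
    (∃ S : Set V, S.encard ≤ (k : ℕ∞) ∧
      IsEmpty (starGraph (s + 1) ↪g G.induce Sᶜ)) ↔
    (∃ F : Set (Sym2 (Option V)), F ⊆ (cone G).edgeSet ∧ F.encard ≤ (k : ℕ∞) ∧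
      IsEmpty (sDiamond s ↪g (cone G).deleteEdges F)) := by
  classical
  have tri : ∀ a b c : V, G.Adj a b → G.Adj a c → G.Adj b c → False := by
    intro a b c hab hac hbc
    exact htf {a, b, c} (SimpleGraph.is3Clique_triple_iff.mpr ⟨hab, hac, hbc⟩)
  constructor
  · rintro ⟨S, hScard, hSfree⟩
    refine ⟨(fun v : V => s((none : Option V), (some v : Option V))) '' S, ?_, ?_, ?_⟩
    · rintro e ⟨v, hv, rfl⟩
      show (cone G).Adj none (some v)
      trivial
    · calc ((fun v : V => s((none : Option V), (some v : Option V))) '' S).encard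
          = S.encard := by
            apply Function.Injective.encard_image
            intro a b h
            simpa using h
        _ ≤ (k : ℕ∞) := hScard
    · set F : Set (Sym2 (Option V)) :=
        (fun v : V => s((none : Option V), (some v : Option V))) '' S with hF
      constructor
      intro f
      have fD : ∀ a b, (sDiamond s).Adj a b ↔
          ((cone G).deleteEdges F).Adj (f a) (f b) := fun a b => f.map_rel_iff.symm
      have himg : ∀ a b, (sDiamond s).Adj a b →
          (cone G).Adj (f a) (f b) ∧ s(f a, f b) ∉ F := by
        intro a b h
        have h2 := (fD a b).mp h
        rwa [SimpleGraph.deleteEdges_adj] at h2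
      have key : ∀ i i' : Fin 2, i ≠ i' → f (Sum.inl i) = none → False := by
        intro i i' hii hnone
        obtain ⟨u, hu⟩ : ∃ u, f (Sum.inl i') = some u := by
          cases h : f (Sum.inl i') with
          | none =>
            exact absurd (Sum.inl_injective (f.injective (hnone.trans h.symm))) hii
          | some w => exact ⟨w, rfl⟩
        have hleaf : ∀ j : Fin (s+1), ∃ w, f (Sum.inr j) = some w := by
          intro j
          cases h : f (Sum.inr j) with
          | none => exact absurd (f.injective (hnone.trans h.symm)) (Sum.inl_ne_inr)
          | some w => exact ⟨w, rfl⟩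
        choose v hv using hleaf
        have hadj_cc := himg (Sum.inl i) (Sum.inl i') hii
        rw [hnone, hu] at hadj_cc
        have huS : u ∉ S := by
          intro huS
          exact hadj_cc.2 ⟨u, huS, rfl⟩
        have hvS : ∀ j, v j ∉ S := by
          intro j hj
          have h := himg (Sum.inl i) (Sum.inr j) trivial
          rw [hnone, hv j] at h
          exact h.2 ⟨v j, hj, rfl⟩
        have hGadj : ∀ j, G.Adj u (v j) := by
          intro j
          have h := himg (Sum.inl i') (Sum.inr j) trivial
          rw [hu, hv j] at h
          exact h.1
        have hvnadj : ∀ j j' : Fin (s+1), ¬ G.Adj (v j) (v j') := by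
          intro j j' hadj
          have hd : ((cone G).deleteEdges F).Adj (f (Sum.inr j)) (f (Sum.inr j')) := by
            rw [hv j, hv j', SimpleGraph.deleteEdges_adj]
            refine ⟨hadj, ?_⟩
            rintro ⟨w, hw, he⟩
            have hm : (none : Option V) ∈ s((some (v j) : Option V), some (v j')) :=
              he ▸ Sym2.mem_mk_left _ _
            simp at hm
          exact (fD (Sum.inr j) (Sum.inr j')).mpr hd
        have hune : ∀ j, u ≠ v j := by
          intro j h
          exact Sum.inl_ne_inr (f.injective (by rw [hu, hv j, h]))
        have hvinj : Function.Injective v := by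
          intro j j' h
          exact Sum.inr_injective (f.injective (by rw [hv j, hv j', h]))
        refine hSfree.false ⟨⟨fun a => Sum.elim (fun _ => (⟨u, huS⟩ : ↥Sᶜ))
          (fun j => (⟨v j, hvS j⟩ : ↥Sᶜ)) a, ?_⟩, ?_⟩
        · rintro (x | x) (y | y) h
          · exact congrArg Sum.inl (Subsingleton.elim x y)
          · exact absurd (congrArg Subtype.val h) (hune y)
          · exact absurd (congrArg Subtype.val h).symm (hune x)
          · exact congrArg Sum.inr (hvinj (congrArg Subtype.val h))
        · rintro (x | x) (y | y)
          · exact iff_of_false G.irrefl not_false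
          · exact iff_of_true (hGadj y) trivial
          · exact iff_of_true (hGadj x).symm trivial
          · exact iff_of_false (hvnadj x y) not_false
      cases h0 : f (Sum.inl 0) with
      | none => exact key 0 1 (by decide) h0
      | some u0 =>
        cases h1 : f (Sum.inl 1) with
        | none => exact key 1 0 (by decide) h1
        | some u1 =>
          have hleafnone : ∀ j : Fin (s+1), f (Sum.inr j) = none := by
            intro j
            cases hj : f (Sum.inr j) with
            | none => rfl
            | some w =>
              have h01 := himg (Sum.inl (0 : Fin 2)) (Sum.inl (1 : Fin 2))
                (by show (0 : Fin 2) ≠ 1; decide)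
              have h0j := himg (Sum.inl 0) (Sum.inr j) trivial
              have h1j := himg (Sum.inl 1) (Sum.inr j) trivial
              rw [h0, h1] at h01
              rw [h0, hj] at h0j
              rw [h1, hj] at h1j
              exact (tri u0 u1 w h01.1 h0j.1 h1j.1).elim
          have e01 := Sum.inr_injective (f.injective
            ((hleafnone ⟨0, by omega⟩).trans (hleafnone ⟨1, by omega⟩).symm))
          simpa using congrArg Fin.val e01
  · rintro ⟨F, hFsub, hFcard, hFfree⟩
    set S : Set V := {v | (some v : Option V) ∈ pickO '' F} with hS
    have hex : ∀ e ∈ F, ∃ v : V, (some v : Option V) ∈ e := by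
      intro e he
      have hadj := hFsub he
      induction e using Sym2.ind with
      | _ a b =>
        rw [SimpleGraph.mem_edgeSet] at hadj
        cases a with
        | none =>
          cases b with
          | none => exact hadj.elim
          | some y => exact ⟨y, Sym2.mem_mk_right _ _⟩
        | some x => exact ⟨x, Sym2.mem_mk_left _ _⟩
    have hmemS : ∀ e ∈ F, ∃ w ∈ S, (some w : Option V) ∈ e := by
      intro e he
      have h := hex e he
      refine ⟨h.choose, ?_, h.choose_spec⟩
      show some h.choose ∈ pickO '' F
      refine ⟨e, he, ?_⟩
      unfold pickO
      rw [dif_pos h]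
    have hScard : S.encard ≤ (k : ℕ∞) := by
      have h1 : (some '' S : Set (Option V)) ⊆ pickO '' F := by
        rintro x ⟨v, hv, rfl⟩
        exact hv
      calc S.encard = (some '' S).encard :=
            ((Option.some_injective V).encard_image S).symm
        _ ≤ (pickO '' F).encard := Set.encard_mono h1
        _ ≤ F.encard := Set.encard_image_le _ _
        _ ≤ (k : ℕ∞) := hFcard
    refine ⟨S, hScard, ?_⟩
    constructor
    intro f
    set u : V := (f (Sum.inl 0)).1 with hu
    have huS : u ∉ S := (f (Sum.inl 0)).2
    set v : Fin (s+1) → V := fun j => (f (Sum.inr j)).1 with hv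
    have hvS : ∀ j, v j ∉ S := fun j => (f (Sum.inr j)).2
    have fadj : ∀ a b, (starGraph (s+1)).Adj a b ↔ (G.induce Sᶜ).Adj (f a) (f b) :=
      fun a b => f.map_rel_iff.symm
    have hadjuv : ∀ j, G.Adj u (v j) := fun j => (fadj (Sum.inl 0) (Sum.inr j)).mp trivial
    have hnadj : ∀ j j', ¬ G.Adj (v j) (v j') :=
      fun j j' h => (fadj (Sum.inr j) (Sum.inr j')).mpr h
    have hune : ∀ j, u ≠ v j := by
      intro j h
      exact Sum.inl_ne_inr (f.injective (Subtype.ext h))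
    have hvinj : ∀ j j', v j = v j' → j = j' :=
      fun j j' h => Sum.inr_injective (f.injective (Subtype.ext h))
    have hnotF : ∀ e : Sym2 (Option V), (∀ w ∈ S, (some w : Option V) ∉ e) → e ∉ F := by
      intro e h he
      obtain ⟨w, hwS, hwe⟩ := hmemS e he
      exact h w hwS hwe
    have h1 : ∀ x : V, x ∉ S → s((none : Option V), (some x : Option V)) ∉ F := by
      intro x hx
      apply hnotF
      intro w hwS hwe
      rcases Sym2.mem_iff.mp hwe with h | h
      · simp at h
      · exact hx (Option.some_injective V h ▸ hwS)
    have h2 : ∀ x y : V, x ∉ S → y ∉ S →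
        s((some x : Option V), (some y : Option V)) ∉ F := by
      intro x y hx hy
      apply hnotF
      intro w hwS hwe
      rcases Sym2.mem_iff.mp hwe with h | h
      · exact hx (Option.some_injective V h ▸ hwS)
      · exact hy (Option.some_injective V h ▸ hwS)
    have A1 : ((cone G).deleteEdges F).Adj none (some u) := by
      rw [SimpleGraph.deleteEdges_adj]
      exact ⟨trivial, h1 u huS⟩
    have A2 : ∀ j, ((cone G).deleteEdges F).Adj none (some (v j)) := by
      intro j
      rw [SimpleGraph.deleteEdges_adj]
      exact ⟨trivial, h1 _ (hvS j)⟩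
    have A3 : ∀ j, ((cone G).deleteEdges F).Adj (some u) (some (v j)) := by
      intro j
      rw [SimpleGraph.deleteEdges_adj]
      exact ⟨hadjuv j, h2 _ _ huS (hvS j)⟩
    have N1 : ∀ j j', ¬ ((cone G).deleteEdges F).Adj (some (v j)) (some (v j')) := by
      intro j j' h
      rw [SimpleGraph.deleteEdges_adj] at h
      exact hnadj j j' h.1
    refine hFfree.false ⟨⟨fun a => Sum.elim
      (![(none : Option V), some u])
      (fun j => (some (v j) : Option V)) a, ?_⟩, ?_⟩
    · rintro (x | x) (y | y) h
      · fin_cases x <;> fin_cases y <;> first | rfl | (exfalso; simp at h)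
      · fin_cases x <;> simp at h
        exact absurd h (hune y)
      · fin_cases y <;> simp at h
        exact absurd h.symm (hune x)
      · exact congrArg Sum.inr (hvinj x y (Option.some_injective V (by simpa using h)))
    · rintro (x | x) (y | y)
      · fin_cases x <;> fin_cases y
        · exact iff_of_false ((cone G).deleteEdges F).irrefl
            (by show ¬ (0 : Fin 2) ≠ 0; simp)
        · exact iff_of_true A1 (by show (0 : Fin 2) ≠ 1; decide)
        · exact iff_of_true A1.symm (by show (1 : Fin 2) ≠ 0; decide)
        · exact iff_of_false ((cone G).deleteEdges F).irrefl
            (by show ¬ (1 : Fin 2) ≠ 1; simp)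
      · fin_cases x
        · exact iff_of_true (A2 y) trivial
        · exact iff_of_true (A3 y) trivial
      · fin_cases y
        · exact iff_of_true (A2 x).symm trivial
        · exact iff_of_true (A3 x).symm trivial
      · exact iff_of_false (N1 x y) not_false
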